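/- Let ((Aₙ),(Ψₙ)) be a factorable weak operator-valued frame in B(H,H₀) with frame operator S_{A,Ψ}, and let Ãₙ := Aₙ S_{A,Ψ}⁻¹ and Ψ̃ₙ := Ψₙ (S_{A,Ψ}⁻¹)* denote its canonical dual. Suppose (yₙ) and (zₙ) are square-summable sequences in H₀ and h ∈ H satisfies h = Σ_{n=1}^∞ Aₙ* yₙ = Σ_{n=1}^∞ Ψₙ* zₙ. Then Σ_{n=1}^∞ ⟨yₙ, zₙ⟩ = Σ_{n=1}^∞ ⟨Ψ̃ₙ h, Ãₙ h⟩ + Σ_{n=1}^∞ ⟨yₙ − Ψ̃ₙ h, zₙ − Ãₙ h⟩, all series converging. -/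

import Mathlib

noncomputable section

open ContinuousLinearMap Filter

variable {H H₀ : Type*} [NormedAddCommGroup H] [InnerProductSpace ℂ H] [CompleteSpace H]
  [NormedAddCommGroup H₀] [InnerProductSpace ℂ H₀] [CompleteSpace H₀]

/-- `ℓ²(I, H₀)`: square-summable `H₀`-valued families indexed by `I`. -/
abbrev l2 (I : Type*) (H₀ : Type*) [NormedAddCommGroup H₀] : Type _ :=
  lp (fun _ : I => H₀) 2

/-- The isometry `Lᵢ : H₀ → ℓ²(I,H₀)` sending `h` to the family equal to `h` at index `i`
and `0` elsewhere. -/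
def Lop {I : Type*} [DecidableEq I] (i : I) : H₀ →L[ℂ] l2 I H₀ :=
  LinearMap.mkContinuous
    { toFun := fun h => lp.single 2 i h
      map_add' := by
        intro a b
        apply lp.ext
        funext j
        by_cases hj : j = i
        · subst hj; simp [lp.single_apply_self]
        · simp [lp.single_apply_ne _ _ _ hj, lp.coeFn_add]
      map_smul' := by
        intro c a
        simp [lp.single_smul] }
    1
    (by
      intro h
      simpa using (lp.norm_single (p := 2) (by norm_num) (fun _ : I => h) i).le)

/-- Convergence of the sequence of partial sums `∑_{n < m} f n` to `x` as `m → ∞`. -/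
def SeqSum {E : Type*} [AddCommMonoid E] [TopologicalSpace E] (f : ℕ → E) (x : E) : Prop :=
  Tendsto (fun m => ∑ n ∈ Finset.range m, f n) atTop (nhds x)

/-- For a factorable weak OVF `((Aₙ),(Ψₙ))` with frame operator `S`
(with inverse `T`), if `h = Σ Aₙ* yₙ = Σ Ψₙ* zₙ` with `(yₙ), (zₙ)` square-summable, then
`Σ ⟨yₙ, zₙ⟩ = Σ ⟨Ψ̃ₙ h, Ãₙ h⟩ + Σ ⟨yₙ − Ψ̃ₙ h, zₙ − Ãₙ h⟩`, all series converging,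
where `Ãₙ = Aₙ S⁻¹` and `Ψ̃ₙ = Ψₙ (S⁻¹)*`. -/

private lemma coord_eq (g : ℕ → H₀) (F : l2 ℕ H₀)
    (hF : SeqSum (fun n => Lop n (g n)) F) (k : ℕ) : F k = g k := by
  set P : ℕ → l2 ℕ H₀ := fun m => ∑ n ∈ Finset.range m, Lop n (g n) with hP
  have hcoord : ∀ m, k < m → (P m) k = g k := by
    intro m hm
    have : (P m) k = ∑ n ∈ Finset.range m, (lp.single 2 n (g n) : ∀ _ : ℕ, H₀) k := by
      rw [hP, lp.coeFn_sum, Finset.sum_apply]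
      rfl
    rw [this]
    have e : ∀ n, (lp.single 2 n (g n) : ∀ _ : ℕ, H₀) k = if k = n then g k else 0 := by
      intro n
      rcases eq_or_ne k n with rfl | hne
      · simp [lp.single_apply_self]
      · simp [lp.single_apply_ne _ _ _ hne, hne]
    simp only [e]
    simp [Finset.sum_ite_eq, Finset.mem_range.mpr hm]
  have h1 : Tendsto (fun m => (P m) k) atTop (nhds (F k)) := by
    rw [tendsto_iff_norm_sub_tendsto_zero]
    have h2 : Tendsto (fun m => ‖P m - F‖) atTop (nhds 0) := by
      have := (tendsto_iff_norm_sub_tendsto_zero).mp hF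
      simpa [hP] using this
    refine squeeze_zero (fun m => norm_nonneg _) (fun m => ?_) h2
    simpa using lp.norm_apply_le_norm two_ne_zero (P m - F) k
  have h3 : Tendsto (fun _ : ℕ => g k) atTop (nhds (F k)) := by
    refine h1.congr' ?_
    filter_upwards [eventually_gt_atTop k] with m hm
    exact hcoord m hm
  exact tendsto_nhds_unique h3 tendsto_const_nhds

private lemma innerA (B : ℕ → H →L[ℂ] H₀) (u x : H) (w : ℕ → H₀)
    (hx : SeqSum (fun n => adjoint (B n) (w n)) x) :
    Tendsto (fun m => ∑ n ∈ Finset.range m, (inner ℂ (B n u) (w n) : ℂ)) atTop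
      (nhds (inner ℂ u x)) := by
  have : ∀ m, ∑ n ∈ Finset.range m, (inner ℂ (B n u) (w n) : ℂ)
      = inner ℂ u (∑ n ∈ Finset.range m, adjoint (B n) (w n)) := by
    intro m
    rw [inner_sum]
    exact Finset.sum_congr rfl fun n _ => (adjoint_inner_right (B n) u (w n)).symm
  simp only [this]
  exact (tendsto_const_nhds (x := u)).inner hx

theorem stmt0
    (A Ψ : ℕ → H →L[ℂ] H₀) (S T : H →L[ℂ] H)
    (hS : ∀ h : H, SeqSum (fun n => adjoint (Ψ n) (A n h)) (S h))
    (hST : S ∘L T = 1) (hTS : T ∘L S = 1)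
    (θA θΨ : H →L[ℂ] l2 ℕ H₀)
    (hθA : ∀ h : H, SeqSum (fun n => Lop n (A n h)) (θA h))
    (hθΨ : ∀ h : H, SeqSum (fun n => Lop n (Ψ n h)) (θΨ h))
    (y z : ℕ → H₀)
    (hy : Summable fun n => ‖y n‖ ^ 2) (hz : Summable fun n => ‖z n‖ ^ 2)
    (h : H)
    (hhy : SeqSum (fun n => adjoint (A n) (y n)) h)
    (hhz : SeqSum (fun n => adjoint (Ψ n) (z n)) h) :
    ∃ s₂ s₃ : ℂ,
      SeqSum (fun n => (inner ℂ ((Ψ n ∘L adjoint T) h) ((A n ∘L T) h) : ℂ)) s₂ ∧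
      SeqSum (fun n => (inner ℂ (y n - (Ψ n ∘L adjoint T) h) (z n - (A n ∘L T) h) : ℂ)) s₃ ∧
      SeqSum (fun n => (inner ℂ (y n) (z n) : ℂ)) (s₂ + s₃) := by

  -- members of ℓ²
  have sqsum : ∀ w : ℕ → H₀, (Summable fun n => ‖w n‖ ^ 2) → Memℓp w 2 := by
    intro w hw
    apply memℓp_gen
    have e2 : (2 : ENNReal).toReal = ((2 : ℕ) : ℝ) := by norm_num
    simpa [e2, Real.rpow_natCast] using hw
  set Y : l2 ℕ H₀ := ⟨y, sqsum y hy⟩ with hY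
  set Z : l2 ℕ H₀ := ⟨z, sqsum z hz⟩ with hZ
  set u : H := adjoint T h with hu
  set v : H := T h with hv
  set F : l2 ℕ H₀ := θΨ u with hF
  set G : l2 ℕ H₀ := θA v with hG
  have hFc : ∀ k, F k = Ψ k u := coord_eq (fun n => Ψ n u) F (hθΨ u)
  have hGc : ∀ k, G k = A k v := coord_eq (fun n => A n v) G (hθA v)
  -- key inner ℂ product values
  have hSTv : S v = h := by
    have := congrArg (fun (L : H →L[ℂ] H) => L h) hST
    simpa [hv] using this
  have hFG : (inner ℂ F G : ℂ) = inner ℂ u h := by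
    have h1 : HasSum (fun n => (inner ℂ (F n) (G n) : ℂ)) (inner ℂ F G) := lp.hasSum_inner (𝕜 := ℂ) F G
    have h2 := innerA Ψ u (S v) (fun n => A n v) (hS v)
    rw [hSTv] at h2
    refine tendsto_nhds_unique ?_ h2
    have := h1.tendsto_sum_nat
    refine this.congr fun m => Finset.sum_congr rfl fun n _ => ?_
    rw [hFc n, hGc n]
  have hFZ : (inner ℂ F Z : ℂ) = inner ℂ u h := by
    have h1 : HasSum (fun n => (inner ℂ (F n) (Z n) : ℂ)) (inner ℂ F Z) := lp.hasSum_inner (𝕜 := ℂ) F Z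
    have h2 := innerA Ψ u h z hhz
    refine tendsto_nhds_unique ?_ h2
    refine h1.tendsto_sum_nat.congr fun m => Finset.sum_congr rfl fun n _ => ?_
    rw [hFc n]
  have hYG : (inner ℂ Y G : ℂ) = inner ℂ h v := by
    have h1 : HasSum (fun n => (inner ℂ (Y n) (G n) : ℂ)) (inner ℂ Y G) := lp.hasSum_inner (𝕜 := ℂ) Y G
    have h2 : Tendsto (fun m => ∑ n ∈ Finset.range m,
        (inner ℂ (y n) (A n v) : ℂ)) atTop (nhds (inner ℂ h v)) := by
      have : ∀ m, ∑ n ∈ Finset.range m, (inner ℂ (y n) (A n v) : ℂ)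
          = inner ℂ (∑ n ∈ Finset.range m, adjoint (A n) (y n)) v := by
        intro m
        rw [sum_inner]
        exact Finset.sum_congr rfl fun n _ => (adjoint_inner_left (A n) v (y n)).symm
      simp only [this]
      exact hhy.inner tendsto_const_nhds
    refine tendsto_nhds_unique ?_ h2
    refine h1.tendsto_sum_nat.congr fun m => Finset.sum_congr rfl fun n _ => ?_
    rw [hGc n]
  have huh : (inner ℂ u h : ℂ) = inner ℂ h v := by
    rw [hu, hv, adjoint_inner_left]
  -- cross terms vanish
  have cross1 : (inner ℂ F (Z - G) : ℂ) = 0 := by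
    rw [inner_sub_right, hFZ, hFG, sub_self]
  have cross2 : (inner ℂ (Y - F) G : ℂ) = 0 := by
    rw [inner_sub_left, hYG, hFG, huh, sub_self]
  have hYZ : (inner ℂ Y Z : ℂ) = inner ℂ F G + inner ℂ (Y - F) (Z - G) := by
    have key : (inner ℂ Y Z : ℂ)
        = inner ℂ F G + inner ℂ F (Z - G) + (inner ℂ (Y - F) G + inner ℂ (Y - F) (Z - G)) := by
      rw [← inner_add_right, ← inner_add_right, ← inner_add_left]
      have e1 : F + (Y - F) = Y := by abel
      have e2 : G + (Z - G) = Z := by abel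
      rw [e1, e2]
    rw [key, cross1, cross2]; ring
  refine ⟨inner ℂ F G, inner ℂ (Y - F) (Z - G), ?_, ?_, ?_⟩
  · have h1 := (lp.hasSum_inner (𝕜 := ℂ) F G).tendsto_sum_nat
    refine h1.congr fun m => Finset.sum_congr rfl fun n _ => ?_
    rw [hFc n, hGc n]; simp only [hu, hv, comp_apply]
  · have h1 := (lp.hasSum_inner (𝕜 := ℂ) (Y - F) (Z - G)).tendsto_sum_nat
    refine h1.congr fun m => Finset.sum_congr rfl fun n _ => ?_
    have e1 : (Y - F) n = y n - Ψ n u := by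
      rw [lp.coeFn_sub, Pi.sub_apply, hFc n]
    have e2 : (Z - G) n = z n - A n v := by
      rw [lp.coeFn_sub, Pi.sub_apply, hGc n]
    rw [e1, e2]; simp only [hu, hv, comp_apply]
  · have h1 := (lp.hasSum_inner (𝕜 := ℂ) Y Z).tendsto_sum_nat
    rw [hYZ] at h1
    exact h1
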